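/- Let d₁, d₂, d₃ ≥ 1 and k ≥ 1 be integers, and let F : ℝ^{d₂} → ℝ^{d₃} and G : ℝ^{d₁} → ℝ^{d₂} be k-times continuously differentiable functions. Then for every x ∈ ℝ^{d₁}: ‖D^k(F ∘ G)(x)‖_op ≤ ∑_{ω ∈ Ω(k)} ‖D^{|ω|}F(G(x))‖_op · ∏_{i=1}^{|ω|} ‖D^{|ω_i|}G(x)‖_op. -/
import Mathlib


noncomputable section

/-- `ℝ^d` with the Euclidean norm. -/
abbrev Euc (d : ℕ) := EuclideanSpace ℝ (Fin d)



open Function Set OrderedFinpartition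

namespace OrderedFinpartition

variable {n : ℕ} (c : OrderedFinpartition n)

/-- The `m`-th part of an ordered finpartition, as a `Finset`. -/
def part (m : Fin c.length) : Finset (Fin n) := Finset.univ.image (c.emb m)

lemma coe_part (m : Fin c.length) : (c.part m : Set (Fin n)) = Set.range (c.emb m) := by
  simp [part]

lemma mem_part_iff {m : Fin c.length} {j : Fin n} : j ∈ c.part m ↔ ∃ r, c.emb m r = j := by
  simp [part]

lemma part_nonempty (m : Fin c.length) : (c.part m).Nonempty :=
  ⟨c.emb m ⟨0, c.partSize_pos m⟩, c.mem_part_iff.2 ⟨_, rfl⟩⟩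

lemma card_part (m : Fin c.length) : (c.part m).card = c.partSize m := by
  rw [part, Finset.card_image_of_injective _ (c.emb_strictMono m).injective, Finset.card_univ,
    Fintype.card_fin]

lemma part_injective : Function.Injective c.part := by
  intro m m' h
  by_contra hne
  have hd := c.disjoint (Set.mem_univ m) (Set.mem_univ m') hne
  have h0 : c.emb m ⟨0, c.partSize_pos m⟩ ∈ Set.range (c.emb m) := ⟨_, rfl⟩
  have h0' : c.emb m ⟨0, c.partSize_pos m⟩ ∈ Set.range (c.emb m') := by
    rw [← c.coe_part, ← h, c.coe_part]; exact ⟨_, rfl⟩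
  exact Set.disjoint_left.1 hd h0 h0'

lemma part_eq_of_mem {m m' : Fin c.length} {j : Fin n} (h : j ∈ c.part m) (h' : j ∈ c.part m') :
    m = m' := by
  by_contra hne
  have hd : Disjoint (Set.range (c.emb m)) (Set.range (c.emb m')) :=
    c.disjoint (Set.mem_univ m) (Set.mem_univ m') hne
  rw [← c.coe_part, ← c.coe_part] at hd
  exact Set.disjoint_left.1 hd h h'

/-- The underlying (unordered) finpartition of `Finset.univ : Finset (Fin n)`. -/
def toFinpartition : Finpartition (Finset.univ : Finset (Fin n)) where
  parts := Finset.univ.image c.part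
  supIndep := by
    rw [Finset.supIndep_iff_pairwiseDisjoint]
    rintro b hb b' hb' hne
    simp only [Finset.coe_image, Finset.coe_univ, Set.image_univ, Set.mem_range] at hb hb'
    obtain ⟨m, rfl⟩ := hb
    obtain ⟨m', rfl⟩ := hb'
    have hmm : m ≠ m' := fun h => hne (by rw [h])
    have hd : Disjoint (Set.range (c.emb m)) (Set.range (c.emb m')) :=
      c.disjoint (Set.mem_univ m) (Set.mem_univ m') hmm
    rw [← c.coe_part, ← c.coe_part] at hd
    exact Finset.disjoint_coe.1 hd
  sup_parts := by
    apply Finset.Subset.antisymm (Finset.subset_univ _)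
    intro j _
    rcases c.cover j with ⟨m, r, hr⟩
    exact Finset.mem_sup.2 ⟨c.part m, Finset.mem_image_of_mem _ (Finset.mem_univ m),
      c.mem_part_iff.2 ⟨r, hr⟩⟩
  bot_notMem := by
    simp only [Finset.bot_eq_empty, Finset.mem_image]
    rintro ⟨m, -, hm⟩
    exact (c.part_nonempty m).ne_empty hm

lemma parts_toFinpartition : c.toFinpartition.parts = Finset.univ.image c.part := rfl

lemma card_parts_toFinpartition : c.toFinpartition.parts.card = c.length := by
  rw [parts_toFinpartition, Finset.card_image_of_injective _ c.part_injective,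
    Finset.card_univ, Fintype.card_fin]

/-- the largest element of the `m`-th part. -/
lemma max'_part (m : Fin c.length) :
    (c.part m).max' (c.part_nonempty m) =
      c.emb m ⟨c.partSize m - 1, Nat.sub_one_lt_of_lt (c.partSize_pos m)⟩ := by
  apply le_antisymm
  · apply Finset.max'_le
    intro j hj
    obtain ⟨r, rfl⟩ := c.mem_part_iff.1 hj
    apply (c.emb_strictMono m).monotone
    simp only [Fin.le_def]
    omega
  · exact Finset.le_max' _ _ (c.mem_part_iff.2 ⟨_, rfl⟩)

end OrderedFinpartition

namespace OrderedFinpartition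

variable {n : ℕ}

lemma max'_part_mem (c : OrderedFinpartition n) (m : Fin c.length) :
    (c.part m).max' (c.part_nonempty m) ∈ c.part m := Finset.max'_mem _ _

lemma strictMono_keyFn (c : OrderedFinpartition n) :
    StrictMono (fun m => (c.part m).max' (c.part_nonempty m)) := by
  simp only [max'_part]
  exact c.parts_strictMono

lemma range_keyFn (c : OrderedFinpartition n) :
    Set.range (fun m => (c.part m).max' (c.part_nonempty m)) =
      {j | ∀ b ∈ Finset.univ.image c.part, j ∈ b → ∀ i ∈ b, i ≤ j} := by
  ext j
  constructor
  · rintro ⟨m, rfl⟩ b hb hjb i hib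
    obtain ⟨m', -, rfl⟩ := Finset.mem_image.1 hb
    have hm : m' = m := c.part_eq_of_mem hjb (c.max'_part_mem m)
    subst hm
    exact Finset.le_max' _ _ hib
  · intro hj
    have hjm : j ∈ c.part (c.index j) := c.mem_part_iff.2 ⟨c.invEmbedding j, c.emb_invEmbedding j⟩
    refine ⟨c.index j, le_antisymm ?_ ?_⟩
    · apply Finset.max'_le
      intro i hi
      exact hj _ (Finset.mem_image_of_mem _ (Finset.mem_univ _)) hjm i hi
    · exact Finset.le_max' _ _ hjm

lemma toFinpartition_injective :
    Function.Injective (fun c : OrderedFinpartition n => c.toFinpartition) := by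
  intro c c' h
  have hP : (Finset.univ.image c.part) = (Finset.univ.image c'.part) :=
    congrArg Finpartition.parts h
  have hL : c.length = c'.length := by
    have h1 := congrArg Finset.card hP
    rwa [Finset.card_image_of_injective _ c.part_injective,
      Finset.card_image_of_injective _ c'.part_injective,
      Finset.card_univ, Finset.card_univ, Fintype.card_fin, Fintype.card_fin] at h1
  have castSM : ∀ {a b : ℕ} (h : a = b), StrictMono (Fin.cast h) := by
    intro a b h
    subst h
    exact fun _ _ hx => hx
  have hcast : StrictMono (Fin.cast hL) := castSM hL
  have castSurj : ∀ {a b : ℕ} (h : a = b), Function.Surjective (Fin.cast h) :=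
    fun h j => ⟨Fin.cast h.symm j, rfl⟩
  have hrange : Set.range (fun m => (c.part m).max' (c.part_nonempty m)) =
      Set.range ((fun m => (c'.part m).max' (c'.part_nonempty m)) ∘ Fin.cast hL) := by
    rw [Function.Surjective.range_comp (castSurj hL)]
    rw [c.range_keyFn, c'.range_keyFn, hP]
  have instL : WellFoundedLT (Fin c.length) := inferInstance
  have hkey : (fun m => (c.part m).max' (c.part_nonempty m)) =
      (fun m => (c'.part m).max' (c'.part_nonempty m)) ∘ Fin.cast hL :=
    (@StrictMono.range_inj (Fin c.length) (Fin n) _ _ instL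
      (fun m => (c.part m).max' (c.part_nonempty m))
      ((fun m => (c'.part m).max' (c'.part_nonempty m)) ∘ Fin.cast hL)
      c.strictMono_keyFn (c'.strictMono_keyFn.comp hcast)).1 hrange
  have hpart : ∀ m, c.part m = c'.part (Fin.cast hL m) := by
    intro m
    apply Finpartition.eq_of_mem_parts c.toFinpartition
      (Finset.mem_image_of_mem _ (Finset.mem_univ m))
      (a := (c.part m).max' (c.part_nonempty m))
    · show c'.part (Fin.cast hL m) ∈ Finset.univ.image c.part
      rw [hP]
      exact Finset.mem_image_of_mem _ (Finset.mem_univ _)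
    · exact c.max'_part_mem m
    · have := congrFun hkey m
      simp only [Function.comp_apply] at this
      rw [this]
      exact c'.max'_part_mem _
  have hsz : ∀ m, c.partSize m = c'.partSize (Fin.cast hL m) := by
    intro m
    rw [← c.card_part m, ← c'.card_part _, hpart m]
  have hemb : ∀ m, Set.range (c.emb m) = Set.range (c'.emb (Fin.cast hL m)) := by
    intro m
    rw [← c.coe_part, ← c'.coe_part, hpart m]
  apply OrderedFinpartition.ext hL
  · rw [Fin.heq_fun_iff hL]
    exact hsz
  · apply Function.hfunext (congrArg Fin hL)
    intro m m' hmm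
    have hmm' : m' = Fin.cast hL m := by
      ext
      exact ((Fin.heq_ext_iff hL).1 hmm).symm ▸ rfl
    subst hmm'
    rw [Fin.heq_fun_iff (hsz m)]
    have hre : Set.range (c.emb m) =
        Set.range ((c'.emb (Fin.cast hL m)) ∘ Fin.cast (hsz m)) := by
      rw [Function.Surjective.range_comp (castSurj (hsz m))]
      exact hemb m
    have instP : WellFoundedLT (Fin (c.partSize m)) := inferInstance
    have : c.emb m = (c'.emb (Fin.cast hL m)) ∘ Fin.cast (hsz m) :=
      (@StrictMono.range_inj (Fin (c.partSize m)) (Fin n) _ _ instP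
        (c.emb m) ((c'.emb (Fin.cast hL m)) ∘ Fin.cast (hsz m))
        (c.emb_strictMono m) ((c'.emb_strictMono _).comp (castSM (hsz m)))).1 hre
    intro i
    exact congrFun this i

end OrderedFinpartition



set_option maxHeartbeats 1000000 in
/-- Chain rule bound on operator norms of iterated Fréchet derivatives of a composition,
with the sum running over set-partitions of `{1,…,k}`. -/
theorem opNorm_iteratedFDeriv_comp_le_sum_partitions
    {d₁ d₂ d₃ : ℕ} (hd₁ : 1 ≤ d₁) (hd₂ : 1 ≤ d₂) (hd₃ : 1 ≤ d₃)
    (k : ℕ) (hk : 1 ≤ k)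
    (F : Euc d₂ → Euc d₃) (G : Euc d₁ → Euc d₂)
    (hF : ContDiff ℝ (k : ℕ∞) F) (hG : ContDiff ℝ (k : ℕ∞) G) (x : Euc d₁) :
    ‖iteratedFDeriv ℝ k (F ∘ G) x‖ ≤
      ∑ ω : Finpartition (Finset.univ : Finset (Fin k)),
        ‖iteratedFDeriv ℝ ω.parts.card F (G x)‖ *
          ∏ b ∈ ω.parts, ‖iteratedFDeriv ℝ b.card G x‖ := by
  classical
  have hF' : HasFTaylorSeriesUpToOn (k : ℕ∞) F (ftaylorSeriesWithin ℝ F Set.univ) Set.univ :=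
    (contDiffOn_univ.2 hF).ftaylorSeriesWithin uniqueDiffOn_univ
  have hG' : HasFTaylorSeriesUpToOn (k : ℕ∞) G (ftaylorSeriesWithin ℝ G Set.univ) Set.univ :=
    (contDiffOn_univ.2 hG).ftaylorSeriesWithin uniqueDiffOn_univ
  have hcomp : HasFTaylorSeriesUpToOn (k : ℕ∞) (F ∘ G)
      (fun y => ((ftaylorSeriesWithin ℝ F Set.univ) (G y)).taylorComp
        ((ftaylorSeriesWithin ℝ G Set.univ) y)) Set.univ :=
    HasFTaylorSeriesUpToOn.comp hF' hG' (Set.mapsTo_univ _ _)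
  have hFterm : ∀ (m : ℕ) (y : Euc d₂),
      ftaylorSeriesWithin ℝ F Set.univ y m = iteratedFDeriv ℝ m F y := fun m y => by
    rw [← iteratedFDerivWithin_univ]; rfl
  have hGterm : ∀ (m : ℕ) (y : Euc d₁),
      ftaylorSeriesWithin ℝ G Set.univ y m = iteratedFDeriv ℝ m G y := fun m y => by
    rw [← iteratedFDerivWithin_univ]; rfl
  have hder : iteratedFDeriv ℝ k (F ∘ G) x = ∑ c : OrderedFinpartition k,
      ((ftaylorSeriesWithin ℝ F Set.univ) (G x)).compAlongOrderedFinpartition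
        ((ftaylorSeriesWithin ℝ G Set.univ) x) c := by
    rw [← iteratedFDerivWithin_univ,
      ← hcomp.eq_iteratedFDerivWithin_of_uniqueDiffOn le_rfl uniqueDiffOn_univ (Set.mem_univ x)]
    rfl
  have hnorm : ∀ c : OrderedFinpartition k,
      ‖((ftaylorSeriesWithin ℝ F Set.univ) (G x)).compAlongOrderedFinpartition
        ((ftaylorSeriesWithin ℝ G Set.univ) x) c‖ ≤
      ‖iteratedFDeriv ℝ c.length F (G x)‖ *
        ∏ m : Fin c.length, ‖iteratedFDeriv ℝ (c.partSize m) G x‖ := by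
    intro c
    apply ContinuousMultilinearMap.opNorm_le_bound (by positivity)
    intro v
    simp only [FormalMultilinearSeries.compAlongOrderedFinpartition_apply]
    apply ((ftaylorSeriesWithin ℝ F Set.univ (G x) c.length).le_opNorm _).trans
    rw [hFterm]
    rw [mul_assoc, ← c.prod_sigma_eq_prod (v := fun i => ‖v i‖), ← Finset.prod_mul_distrib]
    apply mul_le_mul_of_nonneg_left ?_ (norm_nonneg _)
    apply Finset.prod_le_prod (fun m _ => norm_nonneg _)
    intro m _
    rw [OrderedFinpartition.applyOrderedFinpartition_apply]
    apply ((ftaylorSeriesWithin ℝ G Set.univ x (c.partSize m)).le_opNorm _).trans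
    rw [hGterm]
    exact le_rfl
  calc ‖iteratedFDeriv ℝ k (F ∘ G) x‖
      = ‖∑ c : OrderedFinpartition k,
          ((ftaylorSeriesWithin ℝ F Set.univ) (G x)).compAlongOrderedFinpartition
            ((ftaylorSeriesWithin ℝ G Set.univ) x) c‖ := by rw [hder]
    _ ≤ ∑ c : OrderedFinpartition k,
          ‖((ftaylorSeriesWithin ℝ F Set.univ) (G x)).compAlongOrderedFinpartition
            ((ftaylorSeriesWithin ℝ G Set.univ) x) c‖ := norm_sum_le _ _
    _ ≤ ∑ c : OrderedFinpartition k, ‖iteratedFDeriv ℝ c.length F (G x)‖ *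
          ∏ m : Fin c.length, ‖iteratedFDeriv ℝ (c.partSize m) G x‖ :=
        Finset.sum_le_sum fun c _ => hnorm c
    _ = ∑ c : OrderedFinpartition k,
          ‖iteratedFDeriv ℝ c.toFinpartition.parts.card F (G x)‖ *
            ∏ b ∈ c.toFinpartition.parts, ‖iteratedFDeriv ℝ b.card G x‖ := by
        refine Finset.sum_congr rfl fun c _ => ?_
        rw [OrderedFinpartition.card_parts_toFinpartition]
        congr 1
        rw [OrderedFinpartition.parts_toFinpartition,
          Finset.prod_image (fun m _ m' _ h => c.part_injective h)]
        exact Finset.prod_congr rfl fun m _ => by rw [OrderedFinpartition.card_part]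
    _ = ∑ ω ∈ Finset.univ.image
          (fun c : OrderedFinpartition k => c.toFinpartition),
          ‖iteratedFDeriv ℝ ω.parts.card F (G x)‖ *
            ∏ b ∈ ω.parts, ‖iteratedFDeriv ℝ b.card G x‖ :=
        by rw [Finset.sum_image
          (fun c _ c' _ h => OrderedFinpartition.toFinpartition_injective h)]
    _ ≤ ∑ ω : Finpartition (Finset.univ : Finset (Fin k)),
          ‖iteratedFDeriv ℝ ω.parts.card F (G x)‖ *
            ∏ b ∈ ω.parts, ‖iteratedFDeriv ℝ b.card G x‖ :=
        Finset.sum_le_sum_of_subset_of_nonneg (Finset.subset_univ _)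
          (fun ω _ _ => by positivity)
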